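/- Fix β > 0, x,y ∈ (0,1), and let δ = h_β(x,y). Then (β²/2)(x+y)δ - β²xy - (1/2)ln(1-e^{-βδ}) - (xβ/2)ln(1-e^{-β(x-δ)}) - (yβ/2)ln(1-e^{-β(y-δ)}) - ((1+(1-x-y)β)/2)ln(1-e^{-β(1-x-y+δ)}) + ((1+xβ)/2)ln(1-e^{-βx}) + ((1+yβ)/2)ln(1-e^{-βy}) + ((1+(1-x)β)/2)ln(1-e^{-β(1-x)}) + ((1+(1-y)β)/2)ln(1-e^{-β(1-y)}) - (1+β/2)ln(1-e^{-β}) = 0. -/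

import Mathlib

/-- The limiting height profile `h_β(x,y)` of the Mallows measure. -/
noncomputable def hFn (β x y : ℝ) : ℝ :=
  (1 / β) * (Real.log (1 - Real.exp (-β)) -
    Real.log (Real.exp (-β * x) + Real.exp (-β * y) - Real.exp (-β * (x + y)) - Real.exp (-β)))

/-- The logarithmic identity satisfied at `δ = h_β(x,y)` (Lemma on the constant term
of the local CLT expansion). -/
theorem hFn_log_constant_identity (β x y : ℝ) (hβ : 0 < β)
    (hx : x ∈ Set.Ioo (0:ℝ) 1) (hy : y ∈ Set.Ioo (0:ℝ) 1) :
    β ^ 2 / 2 * (x + y) * hFn β x y - β ^ 2 * x * y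
      - (1 / 2) * Real.log (1 - Real.exp (-β * hFn β x y))
      - (x * β / 2) * Real.log (1 - Real.exp (-β * (x - hFn β x y)))
      - (y * β / 2) * Real.log (1 - Real.exp (-β * (y - hFn β x y)))
      - ((1 + (1 - x - y) * β) / 2) *
          Real.log (1 - Real.exp (-β * (1 - x - y + hFn β x y)))
      + ((1 + x * β) / 2) * Real.log (1 - Real.exp (-β * x))
      + ((1 + y * β) / 2) * Real.log (1 - Real.exp (-β * y))
      + ((1 + (1 - x) * β) / 2) * Real.log (1 - Real.exp (-β * (1 - x)))
      + ((1 + (1 - y) * β) / 2) * Real.log (1 - Real.exp (-β * (1 - y)))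
      - (1 + β / 2) * Real.log (1 - Real.exp (-β)) = 0 := by
  obtain ⟨hx0, hx1⟩ := hx
  obtain ⟨hy0, hy1⟩ := hy
  set a := Real.exp (-β * x) with ha_def
  set b := Real.exp (-β * y) with hb_def
  set q := Real.exp (-β) with hq_def
  have ha0 : 0 < a := Real.exp_pos _
  have hb0 : 0 < b := Real.exp_pos _
  have hq0 : 0 < q := Real.exp_pos _
  have ha1 : a < 1 := by
    rw [ha_def]; exact Real.exp_lt_one_iff.mpr (by nlinarith)
  have hb1 : b < 1 := by
    rw [hb_def]; exact Real.exp_lt_one_iff.mpr (by nlinarith)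
  have hq1 : q < 1 := by
    rw [hq_def]; exact Real.exp_lt_one_iff.mpr (by linarith)
  have haq : q < a := by
    rw [ha_def, hq_def]; exact Real.exp_lt_exp.mpr (by nlinarith)
  have hbq : q < b := by
    rw [hb_def, hq_def]; exact Real.exp_lt_exp.mpr (by nlinarith)
  set A := a + b - a * b - q with hA_def
  have hA0 : 0 < A := by
    nlinarith [mul_pos (by linarith : (0:ℝ) < 1 - a) hb0]
  have h1a : (0:ℝ) < 1 - a := by linarith
  have h1b : (0:ℝ) < 1 - b := by linarith
  have h1q : (0:ℝ) < 1 - q := by linarith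
  have haq0 : (0:ℝ) < a - q := by linarith
  have hbq0 : (0:ℝ) < b - q := by linarith
  have hab : Real.exp (-β * (x + y)) = a * b := by
    rw [ha_def, hb_def, ← Real.exp_add]; ring_nf
  have hδ : hFn β x y = (Real.log (1 - q) - Real.log A) / β := by
    rw [hFn, hab]; rw [hA_def]; ring
  have hexpδ : Real.exp (-(β * hFn β x y)) = A / (1 - q) := by
    rw [hδ]
    rw [show -(β * ((Real.log (1 - q) - Real.log A) / β)) = Real.log A - Real.log (1 - q) by
      field_simp; ring]
    rw [Real.exp_sub, Real.exp_log hA0, Real.exp_log h1q]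
  have hexpδ' : Real.exp (β * hFn β x y) = (1 - q) / A := by
    rw [show β * hFn β x y = -(-(β * hFn β x y)) by ring, Real.exp_neg, hexpδ, inv_div]
  have e1 : 1 - Real.exp (-β * hFn β x y) = (1 - a) * (1 - b) / (1 - q) := by
    rw [show -β * hFn β x y = -(β * hFn β x y) by ring, hexpδ]
    field_simp; ring
  have e2 : 1 - Real.exp (-β * (x - hFn β x y)) = (1 - a) * (b - q) / A := by
    rw [show -β * (x - hFn β x y) = -β * x + β * hFn β x y by ring, Real.exp_add, hexpδ',
      ← ha_def]
    field_simp; ring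
  have e3 : 1 - Real.exp (-β * (y - hFn β x y)) = (1 - b) * (a - q) / A := by
    rw [show -β * (y - hFn β x y) = -β * y + β * hFn β x y by ring, Real.exp_add, hexpδ',
      ← hb_def]
    field_simp; ring
  have e4 : 1 - Real.exp (-β * (1 - x - y + hFn β x y))
      = (a - q) * (b - q) / (a * b * (1 - q)) := by
    rw [show -β * (1 - x - y + hFn β x y)
        = -β + -(-β * x) + -(-β * y) + -(β * hFn β x y) by ring,
      Real.exp_add, Real.exp_add, Real.exp_add, Real.exp_neg (-β * x), Real.exp_neg (-β * y),
      hexpδ, ← ha_def, ← hb_def, ← hq_def]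
    field_simp; ring
  have e5 : 1 - Real.exp (-β * (1 - x)) = (a - q) / a := by
    rw [show -β * (1 - x) = -β + -(-β * x) by ring, Real.exp_add, Real.exp_neg (-β * x),
      ← ha_def, ← hq_def]
    field_simp
  have e6 : 1 - Real.exp (-β * (1 - y)) = (b - q) / b := by
    rw [show -β * (1 - y) = -β + -(-β * y) by ring, Real.exp_add, Real.exp_neg (-β * y),
      ← hb_def, ← hq_def]
    field_simp
  have l1 : Real.log ((1 - a) * (1 - b) / (1 - q))
      = Real.log (1 - a) + Real.log (1 - b) - Real.log (1 - q) := by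
    rw [Real.log_div (by positivity) h1q.ne', Real.log_mul h1a.ne' h1b.ne']
  have l2 : Real.log ((1 - a) * (b - q) / A)
      = Real.log (1 - a) + Real.log (b - q) - Real.log A := by
    rw [Real.log_div (by positivity) hA0.ne', Real.log_mul h1a.ne' hbq0.ne']
  have l3 : Real.log ((1 - b) * (a - q) / A)
      = Real.log (1 - b) + Real.log (a - q) - Real.log A := by
    rw [Real.log_div (by positivity) hA0.ne', Real.log_mul h1b.ne' haq0.ne']
  have l4 : Real.log ((a - q) * (b - q) / (a * b * (1 - q)))
      = Real.log (a - q) + Real.log (b - q) - ((-β * x) + (-β * y) + Real.log (1 - q)) := by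
    rw [Real.log_div (by positivity) (by positivity), Real.log_mul haq0.ne' hbq0.ne',
      Real.log_mul (by positivity) h1q.ne', Real.log_mul ha0.ne' hb0.ne',
      ha_def, hb_def, Real.log_exp, Real.log_exp]
  have l5 : Real.log ((a - q) / a) = Real.log (a - q) - (-β * x) := by
    rw [Real.log_div haq0.ne' ha0.ne', ha_def, Real.log_exp]
  have l6 : Real.log ((b - q) / b) = Real.log (b - q) - (-β * y) := by
    rw [Real.log_div hbq0.ne' hb0.ne', hb_def, Real.log_exp]
  rw [e1, e2, e3, e4, e5, e6, l1, l2, l3, l4, l5, l6, hδ]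
  field_simp
  ring
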